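/- Energy inequality for Burgers in d dimensions: let u, u_θ : D × [t₀,T] → ℝ^d be C¹ with u solving ∂_t u + (u·∇)u = 0, let R := ∂_t u_θ + (u_θ·∇)u_θ, and û := u_θ - u. Then pointwise ∂_t(‖û‖₂²/2) = û·R + û·((u·∇)u - (u_θ·∇)u_θ), hence for each fixed t, ∫_D ∂_t ‖û‖₂² dx ≤ C₁ ∫_D ‖û‖₂² dx + ∫_D ‖R‖₂² dx + d²‖∇u‖_∞ ∫_D ‖u‖₂² dx + d²‖∇u_θ‖_∞ ∫_D ‖u_θ‖₂² dx, where C₁ = 1 + d²‖∇u‖_∞ + d²‖∇u_θ‖_∞. -/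

import Mathlib

open MeasureTheory

lemma aux_bilinear (d : ℕ) (M : ℝ) (hM : 0 ≤ M) (a b : Fin d → ℝ)
    (c : Fin d → Fin d → ℝ) (hc : ∀ i j, |c i j| ≤ M) :
    2 * ∑ i, a i * ∑ j, b j * c i j ≤
      (d:ℝ)^2 * M * (∑ i, (a i)^2) + (d:ℝ)^2 * M * (∑ i, (b i)^2) := by
  have hdd : (d:ℝ) ≤ (d:ℝ)^2 := by exact_mod_cast Nat.le_self_pow two_ne_zero d
  have ha : 0 ≤ ∑ i, (a i)^2 := Finset.sum_nonneg fun i _ => sq_nonneg _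
  have hb : 0 ≤ ∑ i, (b i)^2 := Finset.sum_nonneg fun i _ => sq_nonneg _
  have key : 2 * ∑ i, a i * ∑ j, b j * c i j ≤
      (d:ℝ) * M * (∑ i, (a i)^2) + (d:ℝ) * M * (∑ i, (b i)^2) := by
    have e : 2 * ∑ i, a i * ∑ j, b j * c i j
        = ∑ i, ∑ j, 2 * (a i * (b j * c i j)) := by
      simp only [Finset.mul_sum]
    rw [e]
    calc ∑ i, ∑ j, 2 * (a i * (b j * c i j))
        ≤ ∑ i, ∑ j, M * ((a i)^2 + (b j)^2) := by
          refine Finset.sum_le_sum fun i _ => Finset.sum_le_sum fun j _ => ?_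
          have h1 : |2 * (a i * b j)| ≤ (a i)^2 + (b j)^2 := by
            rw [abs_le]; constructor <;> nlinarith [sq_nonneg (a i - b j), sq_nonneg (a i + b j)]
          calc 2 * (a i * (b j * c i j)) = (2 * (a i * b j)) * c i j := by ring
            _ ≤ |2 * (a i * b j)| * |c i j| := by
                rw [← abs_mul]; exact le_abs_self _
            _ ≤ ((a i)^2 + (b j)^2) * M :=
                mul_le_mul h1 (hc i j) (abs_nonneg _) (by positivity)
            _ = M * ((a i)^2 + (b j)^2) := by ring
      _ = ∑ i, ((d:ℝ) * (M * (a i)^2) + M * ∑ j, (b j)^2) := by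
          refine Finset.sum_congr rfl fun i _ => ?_
          rw [← Finset.mul_sum, Finset.sum_add_distrib, Finset.sum_const, Finset.card_fin, nsmul_eq_mul]
          ring
      _ = (d:ℝ) * M * (∑ i, (a i)^2) + (d:ℝ) * M * (∑ i, (b i)^2) := by
          rw [Finset.sum_add_distrib, Finset.sum_const, Finset.card_fin, nsmul_eq_mul]
          rw [← Finset.mul_sum, ← Finset.mul_sum]
          ring
  nlinarith [mul_le_mul_of_nonneg_right (mul_le_mul_of_nonneg_right hdd hM) ha,
    mul_le_mul_of_nonneg_right (mul_le_mul_of_nonneg_right hdd hM) hb]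

/-- Energy inequality for Burgers in d dimensions: with û = u_θ - u and
R = ∂_t u_θ + (u_θ·∇)u_θ, pointwise ∂_t(‖û‖²/2) = û·R + û·((u·∇)u - (u_θ·∇)u_θ),
and for each fixed t,
∫_D ∂_t‖û‖² ≤ C₁∫_D ‖û‖² + ∫_D ‖R‖² + d²‖∇u‖_∞∫_D ‖u‖² + d²‖∇u_θ‖_∞∫_D ‖u_θ‖²,
with C₁ = 1 + d²‖∇u‖_∞ + d²‖∇u_θ‖_∞. -/
theorem stmt11 (d : ℕ) (D : Set (Fin d → ℝ)) (μ : Measure (Fin d → ℝ))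
    (t₀ T : ℝ)
    (u uθ ut uθt : (Fin d → ℝ) → ℝ → Fin d → ℝ)
    (Du Duθ : (Fin d → ℝ) → ℝ → Fin d → Fin d → ℝ)
    (M Mθ : ℝ) (hM : 0 ≤ M) (hMθ : 0 ≤ Mθ)
    (hut : ∀ x, ∀ t ∈ Set.Icc t₀ T, ∀ i, HasDerivAt (fun s => u x s i) (ut x t i) t)
    (huθt : ∀ x, ∀ t ∈ Set.Icc t₀ T, ∀ i, HasDerivAt (fun s => uθ x s i) (uθt x t i) t)
    (hDu : ∀ x, ∀ t ∈ Set.Icc t₀ T, ∀ i j,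
      HasDerivAt (fun y => u (Function.update x j y) t i) (Du x t i j) (x j))
    (hDuθ : ∀ x, ∀ t ∈ Set.Icc t₀ T, ∀ i j,
      HasDerivAt (fun y => uθ (Function.update x j y) t i) (Duθ x t i j) (x j))
    (hbM : ∀ x, ∀ t ∈ Set.Icc t₀ T, ∀ i j, |Du x t i j| ≤ M)
    (hbMθ : ∀ x, ∀ t ∈ Set.Icc t₀ T, ∀ i j, |Duθ x t i j| ≤ Mθ)
    (hpde : ∀ x, ∀ t ∈ Set.Icc t₀ T, ∀ i, ut x t i + ∑ j, u x t j * Du x t i j = 0)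
    (t : ℝ) (htmem : t ∈ Set.Icc t₀ T)
    (hi1 : IntegrableOn (fun x => ∑ i, (uθ x t i - u x t i)^2) D μ)
    (hi2 : IntegrableOn
      (fun x => ∑ i, (uθt x t i + ∑ j, uθ x t j * Duθ x t i j)^2) D μ)
    (hi3 : IntegrableOn (fun x => ∑ i, (u x t i)^2) D μ)
    (hi4 : IntegrableOn (fun x => ∑ i, (uθ x t i)^2) D μ)
    (hi5 : IntegrableOn (fun x => 2 * ∑ i, (uθ x t i - u x t i) *
        ((uθt x t i + ∑ j, uθ x t j * Duθ x t i j)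
          + ((∑ j, u x t j * Du x t i j) - ∑ j, uθ x t j * Duθ x t i j))) D μ) :
    (∀ x, HasDerivAt (fun s => (∑ i, (uθ x s i - u x s i)^2) / 2)
        ((∑ i, (uθ x t i - u x t i) * (uθt x t i + ∑ j, uθ x t j * Duθ x t i j))
          + ∑ i, (uθ x t i - u x t i) *
              ((∑ j, u x t j * Du x t i j) - ∑ j, uθ x t j * Duθ x t i j)) t) ∧
    ((∫ x in D, (2 * ∑ i, (uθ x t i - u x t i) *
          ((uθt x t i + ∑ j, uθ x t j * Duθ x t i j)
            + ((∑ j, u x t j * Du x t i j) - ∑ j, uθ x t j * Duθ x t i j))) ∂μ)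
      ≤ (1 + (d:ℝ)^2 * M + (d:ℝ)^2 * Mθ) *
            (∫ x in D, (∑ i, (uθ x t i - u x t i)^2) ∂μ)
        + (∫ x in D, (∑ i, (uθt x t i + ∑ j, uθ x t j * Duθ x t i j)^2) ∂μ)
        + (d:ℝ)^2 * M * (∫ x in D, (∑ i, (u x t i)^2) ∂μ)
        + (d:ℝ)^2 * Mθ * (∫ x in D, (∑ i, (uθ x t i)^2) ∂μ)) := by

  constructor
  · intro x
    have h : HasDerivAt (fun s => ∑ i, (uθ x s i - u x s i)^2)
        (∑ i, 2 * (uθ x t i - u x t i)^1 * (uθt x t i - ut x t i)) t := by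
      apply HasDerivAt.fun_sum
      intro i _
      exact ((huθt x t htmem i).sub (hut x t htmem i)).pow 2
    have h2 : HasDerivAt (fun s => (∑ i, (uθ x s i - u x s i)^2) / 2)
        ((∑ i, 2 * (uθ x t i - u x t i)^1 * (uθt x t i - ut x t i)) / 2) t := h.div_const 2
    convert h2 using 1
    rw [Finset.sum_div]
    rw [← Finset.sum_add_distrib]
    refine Finset.sum_congr rfl fun i _ => ?_
    linear_combination (uθ x t i - u x t i) * hpde x t htmem i
  · set C₁ : ℝ := 1 + (d:ℝ)^2 * M + (d:ℝ)^2 * Mθ with hC₁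
    set g : (Fin d → ℝ) → ℝ := fun x =>
      C₁ * (∑ i, (uθ x t i - u x t i)^2)
      + (∑ i, (uθt x t i + ∑ j, uθ x t j * Duθ x t i j)^2)
      + (d:ℝ)^2 * M * (∑ i, (u x t i)^2)
      + (d:ℝ)^2 * Mθ * (∑ i, (uθ x t i)^2) with hg
    have hgint : IntegrableOn g D μ :=
      (((hi1.const_mul C₁).add hi2).add (hi3.const_mul _)).add (hi4.const_mul _)
    have hpt : ∀ x, (2 * ∑ i, (uθ x t i - u x t i) *
        ((uθt x t i + ∑ j, uθ x t j * Duθ x t i j)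
          + ((∑ j, u x t j * Du x t i j) - ∑ j, uθ x t j * Duθ x t i j))) ≤ g x := by
      intro x
      set a : Fin d → ℝ := fun i => uθ x t i - u x t i with hadef
      set R : Fin d → ℝ := fun i => uθt x t i + ∑ j, uθ x t j * Duθ x t i j with hRdef
      have e : 2 * ∑ i, a i *
          (R i + ((∑ j, u x t j * Du x t i j) - ∑ j, uθ x t j * Duθ x t i j))
          = 2 * (∑ i, a i * R i)
            + 2 * (∑ i, a i * ∑ j, (u x t j) * Du x t i j)
            + 2 * (∑ i, a i * ∑ j, (uθ x t j) * (-(Duθ x t i j))) := by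
        have h1 : ∀ i, (∑ j, uθ x t j * -(Duθ x t i j))
            = -∑ j, uθ x t j * Duθ x t i j := by
          intro i; simp [mul_neg]
        simp only [h1]
        rw [← mul_add, ← mul_add, ← Finset.sum_add_distrib, ← Finset.sum_add_distrib]
        congr 1
        exact Finset.sum_congr rfl fun i _ => by ring
      have hA : 2 * (∑ i, a i * R i) ≤ (∑ i, (a i)^2) + (∑ i, (R i)^2) := by
        rw [Finset.mul_sum, ← Finset.sum_add_distrib]
        refine Finset.sum_le_sum fun i _ => ?_
        nlinarith [sq_nonneg (a i - R i)]
      have hB := aux_bilinear d M hM a (fun j => u x t j) (fun i j => Du x t i j)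
        (fun i j => hbM x t htmem i j)
      have hC := aux_bilinear d Mθ hMθ a (fun j => uθ x t j)
        (fun i j => -(Duθ x t i j))
        (fun i j => by rw [abs_neg]; exact hbMθ x t htmem i j)
      rw [hg]
      simp only
      rw [e, hC₁]
      have ha2 : 0 ≤ ∑ i, (a i)^2 := Finset.sum_nonneg fun i _ => sq_nonneg _
      simp only [hadef, hRdef] at hA hB hC ha2 ⊢
      linarith
    calc (∫ x in D, (2 * ∑ i, (uθ x t i - u x t i) *
          ((uθt x t i + ∑ j, uθ x t j * Duθ x t i j)
            + ((∑ j, u x t j * Du x t i j) - ∑ j, uθ x t j * Duθ x t i j))) ∂μ)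
        ≤ ∫ x in D, g x ∂μ := integral_mono hi5 hgint hpt
      _ = C₁ * (∫ x in D, (∑ i, (uθ x t i - u x t i)^2) ∂μ)
          + (∫ x in D, (∑ i, (uθt x t i + ∑ j, uθ x t j * Duθ x t i j)^2) ∂μ)
          + (d:ℝ)^2 * M * (∫ x in D, (∑ i, (u x t i)^2) ∂μ)
          + (d:ℝ)^2 * Mθ * (∫ x in D, (∑ i, (uθ x t i)^2) ∂μ) := by
        simp only [hg]
        have I1 : IntegrableOn (fun x => C₁ * ∑ i, (uθ x t i - u x t i)^2) D μ :=
          hi1.const_mul C₁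
        have I3 : IntegrableOn (fun x => (d:ℝ)^2 * M * ∑ i, (u x t i)^2) D μ :=
          hi3.const_mul _
        have I4 : IntegrableOn (fun x => (d:ℝ)^2 * Mθ * ∑ i, (uθ x t i)^2) D μ :=
          hi4.const_mul _
        have I12 : IntegrableOn (fun x => C₁ * (∑ i, (uθ x t i - u x t i)^2)
            + ∑ i, (uθt x t i + ∑ j, uθ x t j * Duθ x t i j)^2) D μ := I1.add hi2
        have I123 : IntegrableOn (fun x => C₁ * (∑ i, (uθ x t i - u x t i)^2)
            + (∑ i, (uθt x t i + ∑ j, uθ x t j * Duθ x t i j)^2)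
            + (d:ℝ)^2 * M * ∑ i, (u x t i)^2) D μ := I12.add I3
        rw [integral_add I123 I4, integral_add I12 I3, integral_add I1 hi2,
          integral_const_mul, integral_const_mul, integral_const_mul]
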